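/- Let ℓ be a prime of the form ℓ = s^6 + 27 t^2 for integers s, t with s ≠ 0. Then the point (3ℓ/s^2, 27 t ℓ / s^3) lies on the elliptic curve y^2 = x^3 - 27 ℓ^2 and has infinite order, so this curve has positive Mordell–Weil rank over Q; consequently 2ℓ is a sum of two rational cubes. -/

import Mathlib

set_option maxHeartbeats 1000000

open WeierstrassCurve

/-! ### A crude 2-adic valuation on `ℚ` -/

/-- `x` has 2-adic valuation `m`. -/
def V2 (m : ℤ) (x : ℚ) : Prop :=
  ∃ a b : ℤ, Odd a ∧ Odd b ∧ x = 2 ^ m * (a : ℚ) / (b : ℚ)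

namespace V2

lemma _root_.Odd.int_ne_zero {a : ℤ} (h : Odd a) : a ≠ 0 := by
  rintro rfl; simp at h

lemma ne_zero {m : ℤ} {x : ℚ} (h : V2 m x) : x ≠ 0 := by
  obtain ⟨a, b, ha, hb, rfl⟩ := h
  have h2 : (2 : ℚ) ^ m ≠ 0 := zpow_ne_zero m two_ne_zero
  have ha' : (a : ℚ) ≠ 0 := Int.cast_ne_zero.mpr ha.int_ne_zero
  have hb' : (b : ℚ) ≠ 0 := Int.cast_ne_zero.mpr hb.int_ne_zero
  positivity

lemma congr {m n : ℤ} {x y : ℚ} (h : V2 m x) (hmn : m = n) (hxy : x = y) : V2 n y := by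
  subst hmn hxy; exact h

lemma mul {m n : ℤ} {x y : ℚ} (hx : V2 m x) (hy : V2 n y) : V2 (m + n) (x * y) := by
  obtain ⟨a, b, ha, hb, rfl⟩ := hx
  obtain ⟨c, d, hc, hd, rfl⟩ := hy
  refine ⟨a * c, b * d, ha.mul hc, hb.mul hd, ?_⟩
  have hb' : (b : ℚ) ≠ 0 := Int.cast_ne_zero.mpr hb.int_ne_zero
  have hd' : (d : ℚ) ≠ 0 := Int.cast_ne_zero.mpr hd.int_ne_zero
  rw [zpow_add₀ (two_ne_zero)]
  push_cast
  field_simp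

lemma div {m n : ℤ} {x y : ℚ} (hx : V2 m x) (hy : V2 n y) : V2 (m - n) (x / y) := by
  obtain ⟨a, b, ha, hb, rfl⟩ := hx
  obtain ⟨c, d, hc, hd, rfl⟩ := hy
  refine ⟨a * d, b * c, ha.mul hd, hb.mul hc, ?_⟩
  have hb' : (b : ℚ) ≠ 0 := Int.cast_ne_zero.mpr hb.int_ne_zero
  have hd' : (d : ℚ) ≠ 0 := Int.cast_ne_zero.mpr hd.int_ne_zero
  have hc' : (c : ℚ) ≠ 0 := Int.cast_ne_zero.mpr hc.int_ne_zero
  have h2 : (2 : ℚ) ^ n ≠ 0 := zpow_ne_zero n two_ne_zero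
  rw [zpow_sub₀ (two_ne_zero)]
  push_cast
  field_simp

lemma add_of_lt {m n : ℤ} {x y : ℚ} (hmn : m < n) (hx : V2 m x) (hy : V2 n y) :
    V2 m (x + y) := by
  obtain ⟨a, b, ha, hb, rfl⟩ := hx
  obtain ⟨c, d, hc, hd, rfl⟩ := hy
  set k : ℕ := (n - m).toNat with hk
  have hk' : (k : ℤ) = n - m := Int.toNat_of_nonneg (by omega)
  have hk1 : 1 ≤ k := by omega
  refine ⟨a * d + 2 ^ k * (c * b), b * d, ?_, hb.mul hd, ?_⟩
  · have he : Even ((2 : ℤ) ^ k * (c * b)) := by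
      refine (Even.mul_right ?_ _)
      exact (Int.even_pow (n := k)).mpr ⟨even_two, by omega⟩
    exact (ha.mul hd).add_even he
  · have hb' : (b : ℚ) ≠ 0 := Int.cast_ne_zero.mpr hb.int_ne_zero
    have hd' : (d : ℚ) ≠ 0 := Int.cast_ne_zero.mpr hd.int_ne_zero
    have h2n : (2 : ℚ) ^ n = 2 ^ m * 2 ^ (k : ℤ) := by
      rw [← zpow_add₀ (two_ne_zero : (2:ℚ) ≠ 0)]; congr 1; omega
    have h2k : ((2 : ℚ) ^ (k : ℤ)) = ((2 ^ k : ℤ) : ℚ) := by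
      push_cast [zpow_natCast]; ring
    rw [h2n, h2k]
    push_cast
    field_simp

lemma unique_aux {m n : ℤ} {x : ℚ} (h1 : V2 m x) (h2 : V2 n x) (hmn : m < n) : False := by
  obtain ⟨a, b, ha, hb, hab⟩ := h1
  obtain ⟨c, d, hc, hd, hcd⟩ := h2
  set k : ℕ := (n - m).toNat with hk
  have hk' : (k : ℤ) = n - m := Int.toNat_of_nonneg (by omega)
  have hk1 : 1 ≤ k := by omega
  have hb' : (b : ℚ) ≠ 0 := Int.cast_ne_zero.mpr hb.int_ne_zero
  have hd' : (d : ℚ) ≠ 0 := Int.cast_ne_zero.mpr hd.int_ne_zero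
  have h2m : (2 : ℚ) ^ m ≠ 0 := zpow_ne_zero m two_ne_zero
  have key : ((a * d : ℤ) : ℚ) = ((2 ^ k * (c * b) : ℤ) : ℚ) := by
    have h2n : (2 : ℚ) ^ n = 2 ^ m * 2 ^ (k : ℤ) := by
      rw [← zpow_add₀ (two_ne_zero : (2:ℚ) ≠ 0)]; congr 1; omega
    have h2k : ((2 : ℚ) ^ (k : ℤ)) = ((2 ^ k : ℤ) : ℚ) := by
      push_cast [zpow_natCast]; ring
    have := hab.symm.trans hcd
    rw [h2n, h2k] at this
    push_cast
    push_cast at this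
    field_simp at this
    refine mul_left_cancel₀ h2m ?_
    linear_combination (2:ℚ) ^ m * this
  have key' : a * d = 2 ^ k * (c * b) := Int.cast_injective key
  have hodd : Odd (a * d) := ha.mul hd
  rw [key'] at hodd
  have : Even ((2:ℤ) ^ k * (c * b)) :=
    Even.mul_right ((Int.even_pow (n := k)).mpr ⟨even_two, by omega⟩) _
  exact (Int.not_odd_iff_even.mpr this) hodd

lemma unique {m n : ℤ} {x : ℚ} (h1 : V2 m x) (h2 : V2 n x) : m = n := by
  rcases lt_trichotomy m n with h | h | h
  · exact absurd (unique_aux h1 h2 h) (by simp)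
  · exact h
  · exact absurd (unique_aux h2 h1 h) (by simp)

lemma intCast {a : ℤ} (ha : Odd a) : V2 0 (a : ℚ) := ⟨a, 1, ha, odd_one, by norm_num⟩

lemma pow {m : ℤ} {x : ℚ} (h : V2 m x) : ∀ n : ℕ, V2 (n * m) (x ^ n)
  | 0 => by simpa using intCast odd_one
  | (n + 1) => ((h.pow n).mul h).congr (by push_cast; ring) (by ring)

/-- Every nonzero integer has a (nonnegative) 2-adic valuation. -/
lemma exists_intCast {r : ℤ} (hr : r ≠ 0) : ∃ v : ℕ, V2 v (r : ℚ) := by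
  have h1 : r.natAbs ≠ 0 := Int.natAbs_ne_zero.mpr hr
  obtain ⟨e, m, hm, hem⟩ := Nat.exists_eq_pow_mul_and_not_dvd h1 2 (by norm_num)
  have hm2 : m % 2 = 1 := Nat.two_dvd_ne_zero.mp hm
  have hmodd : Odd (m : ℤ) := Int.odd_iff.mpr (by omega)
  refine ⟨e, ?_⟩
  rcases Int.natAbs_eq r with h | h
  · refine ⟨(m : ℤ), 1, hmodd, odd_one, ?_⟩
    rw [h, hem]
    push_cast [zpow_natCast]
    ring
  · refine ⟨-(m : ℤ), 1, hmodd.neg, odd_one, ?_⟩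
    rw [h, hem]
    push_cast [zpow_natCast]
    ring

end V2

/-! ### Doubling a point with negative 2-adic valuation of `x` on `y² = x³ + c` -/

open WeierstrassCurve.Affine in
/-- On `y² = x³ + c` with `c` an odd integer, doubling a nonsingular point whose
`x`-coordinate has negative 2-adic valuation `m` gives a point whose `x`-coordinate
has valuation `m - 2`. -/
lemma v2_double {c : ℤ} (hc : Odd c) {W : WeierstrassCurve.Affine ℚ}
    (hW : W = { a₁ := 0, a₂ := 0, a₃ := 0, a₄ := 0, a₆ := (c : ℚ) })
    {x y : ℚ} (h : W.Nonsingular x y) {m : ℤ} (hm : m < 0) (hx : V2 m x) :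
    ∃ (x' y' : ℚ) (h' : W.Nonsingular x' y'),
      Point.some _ _ h + Point.some _ _ h = Point.some _ _ h' ∧ V2 (m - 2) x' := by
  subst hW
  generalize hWdef' : ({ a₁ := 0, a₂ := 0, a₃ := 0, a₄ := 0, a₆ := (c : ℚ) } :
    WeierstrassCurve.Affine ℚ) = W at h ⊢
  change WeierstrassCurve.Affine ℚ at W
  have hWdef := hWdef'.symm
  have heq : y ^ 2 = x ^ 3 + (c : ℚ) := by
    have hE := ((W.nonsingular_iff x y).mp h).1
    rw [W.equation_iff x y] at hE
    simpa [hWdef] using hE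
  have hx3 : V2 (3 * m) (x ^ 3) := (hx.pow 3).congr (by push_cast; ring) rfl
  have hc0 : V2 0 ((c : ℚ)) := V2.intCast hc
  have hy2 : V2 (3 * m) (y ^ 2) :=
    (V2.add_of_lt (by omega) hx3 hc0).congr rfl heq.symm
  have hy : y ≠ 0 := by
    intro h0
    exact hy2.ne_zero (by rw [h0]; ring)
  have hyneg : y ≠ W.negY x y := by
    simp only [negY, hWdef]
    intro hcon
    apply hy
    linarith [hcon]
  refine ⟨W.addX x x (W.slope x x y y), W.addY x x y (W.slope x x y y),
    W.nonsingular_add h h fun hxy => hyneg hxy.2, Point.add_self_of_Y_ne hyneg, ?_⟩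
  have hslope : W.slope x x y y = 3 * x ^ 2 / (2 * y) := by
    rw [slope_of_Y_ne rfl hyneg]
    simp only [negY, hWdef]
    ring_nf
  have hx' : W.addX x x (W.slope x x y y) = 9 * x ^ 4 / (4 * y ^ 2) + -(2 * x) := by
    rw [addX, hslope]
    simp only [hWdef]
    field_simp
    ring
  have h9 : V2 0 (9 : ℚ) := (V2.intCast (by decide : Odd (9:ℤ))).congr rfl (by norm_num)
  have h4 : V2 2 (4 : ℚ) := ⟨1, 1, odd_one, odd_one, by norm_num⟩
  have hnum : V2 (0 + 4 * m) (9 * x ^ 4) := h9.mul ((hx.pow 4).congr (by push_cast; ring) rfl)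
  have hden : V2 (2 + 3 * m) (4 * y ^ 2) := h4.mul hy2
  have hfrac : V2 (m - 2) (9 * x ^ 4 / (4 * y ^ 2)) :=
    (hnum.div hden).congr (by ring) rfl
  have hm2 : V2 1 (-2 : ℚ) := ⟨-1, 1, by decide, odd_one, by norm_num⟩
  have hneg2x : V2 (1 + m) (-(2 * x)) := (hm2.mul hx).congr rfl (by ring)
  exact (V2.add_of_lt (by omega) hfrac hneg2x).congr rfl hx'.symm

open WeierstrassCurve.Affine in
/-- Iterated doubling. -/
lemma v2_orbit {c : ℤ} (hc : Odd c) {W : WeierstrassCurve.Affine ℚ}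
    (hW : W = { a₁ := 0, a₂ := 0, a₃ := 0, a₄ := 0, a₆ := (c : ℚ) })
    {x y : ℚ} (h : W.Nonsingular x y) {m : ℤ} (hm : m < 0) (hx : V2 m x) :
    ∀ k : ℕ, ∃ (x' y' : ℚ) (h' : W.Nonsingular x' y'),
      (2 ^ k • Point.some _ _ h : W.Point) = Point.some _ _ h' ∧ V2 (m - 2 * k) x' := by
  intro k
  induction k with
  | zero => exact ⟨x, y, h, by rw [pow_zero, one_nsmul], hx.congr (by push_cast; ring) rfl⟩
  | succ k ih =>
    obtain ⟨x', y', h', hk, hv⟩ := ih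
    obtain ⟨x'', y'', h'', hd, hv2⟩ := v2_double hc hW h' (by omega) hv
    refine ⟨x'', y'', h'', ?_, hv2.congr (by push_cast; ring) rfl⟩
    have h2 : (2 : ℕ) ^ (k + 1) = 2 ^ k + 2 ^ k := by ring
    rw [h2, add_nsmul, hk, hd]

theorem stmt15 (ℓ : ℕ) (hℓ : ℓ.Prime) (s t : ℤ) (hs : s ≠ 0)
    (hst : (ℓ : ℤ) = s ^ 6 + 27 * t ^ 2)
    (W : WeierstrassCurve.Affine ℚ)
    (hW : W = { a₁ := 0, a₂ := 0, a₃ := 0, a₄ := 0, a₆ := -27 * (ℓ : ℚ) ^ 2 }) :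
    (∃ h : WeierstrassCurve.Affine.Nonsingular W (3 * (ℓ : ℚ) / (s : ℚ) ^ 2)
        (27 * (t : ℚ) * (ℓ : ℚ) / (s : ℚ) ^ 3),
        addOrderOf (WeierstrassCurve.Affine.Point.some _ _ h) = 0) ∧
      (∃ f : ℤ →+ WeierstrassCurve.Affine.Point W, Function.Injective f) ∧
      ∃ x y : ℚ, x ^ 3 + y ^ 3 = 2 * (ℓ : ℚ) := by
  classical
  have hc : ((-27 * (ℓ:ℤ)^2 : ℤ) : ℚ) = -27 * (ℓ : ℚ) ^ 2 := by push_cast; ring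
  have hWc : W = { a₁ := 0, a₂ := 0, a₃ := 0, a₄ := 0, a₆ := ((-27 * (ℓ:ℤ)^2 : ℤ) : ℚ) } := by
    rw [hW, hc]
  -- basic integer facts
  have hs2 : (1:ℤ) ≤ s ^ 2 := by
    rcases hs.lt_or_gt with h | h <;> nlinarith
  have hs6 : (1:ℤ) ≤ s ^ 6 := by nlinarith [hs2, sq_nonneg (s^2), sq_nonneg s]
  have hℓ1 : 1 < ℓ := hℓ.one_lt
  have ht : t ≠ 0 := by
    rintro rfl
    -- then ℓ = s⁶ = (s²)³, impossible for a prime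
    have h1 : (ℓ:ℤ) = s ^ 6 := by omega
    have h2 : ℓ = s.natAbs ^ 6 := by
      have := congrArg Int.natAbs h1
      simpa [Int.natAbs_pow] using this
    have hdvd : s.natAbs ^ 2 ∣ ℓ := ⟨s.natAbs ^ 4, by rw [h2]; ring⟩
    rcases hℓ.eq_one_or_self_of_dvd _ hdvd with h3 | h3
    · have h4 : s.natAbs = 1 := (pow_eq_one_iff_of_nonneg (Nat.zero_le _) (by norm_num)).mp h3
      rw [h4] at h2
      simp at h2
      omega
    · have : ℓ ^ 3 = ℓ := by
        conv_rhs => rw [h2]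
        rw [← h3]; ring
      nlinarith [hℓ.one_lt]
  have ht2 : (1:ℤ) ≤ t ^ 2 := by
    rcases ht.lt_or_gt with h | h <;> nlinarith
  have hl28 : 28 ≤ (ℓ:ℤ) := by omega
  have hlne2 : ℓ ≠ 2 := by omega
  have hlodd : Odd (ℓ : ℤ) := by
    have := hℓ.odd_of_ne_two hlne2
    exact_mod_cast this
  have hlodd' : Odd ((ℓ:ℤ)) := hlodd
  have hcodd : Odd (-27 * (ℓ:ℤ)^2) := by
    rcases hlodd with ⟨j, hj⟩
    exact ⟨-54*j^2 - 54*j - 14, by rw [hj]; ring⟩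
  have h63odd : Odd (s ^ 6 + 3 * t ^ 2) := by
    rcases Int.even_or_odd (s ^ 6 + 3 * t ^ 2) with he | ho
    · exfalso
      have : Even ((ℓ:ℤ)) := by
        rw [hst]
        have h24 : Even (24 * t ^ 2) := ⟨12 * t^2, by ring⟩
        have : s ^ 6 + 27 * t ^ 2 = (s ^ 6 + 3 * t ^ 2) + 24 * t ^ 2 := by ring
        rw [this]
        exact he.add h24
      exact (Int.not_odd_iff_even.mpr this) hlodd
    · exact ho
  -- rational facts
  have hsQ : (s : ℚ) ≠ 0 := Int.cast_ne_zero.mpr hs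
  have htQ : (t : ℚ) ≠ 0 := Int.cast_ne_zero.mpr ht
  have hlQ : (ℓ : ℚ) ≠ 0 := Nat.cast_ne_zero.mpr hℓ.pos.ne'
  have hQl : (ℓ : ℚ) = (s:ℚ) ^ 6 + 27 * (t:ℚ) ^ 2 := by exact_mod_cast hst
  -- projections of W
  have ha1 : W.a₁ = 0 := by rw [hW]
  have ha2 : W.a₂ = 0 := by rw [hW]
  have ha3 : W.a₃ = 0 := by rw [hW]
  have ha4 : W.a₄ = 0 := by rw [hW]
  have ha6 : W.a₆ = -27 * (ℓ : ℚ) ^ 2 := by rw [hW]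
  set X : ℚ := 3 * (ℓ : ℚ) / (s : ℚ) ^ 2 with hX
  set Y : ℚ := 27 * (t : ℚ) * (ℓ : ℚ) / (s : ℚ) ^ 3 with hY
  have hX0 : X ≠ 0 := by
    rw [hX]
    exact div_ne_zero (mul_ne_zero three_ne_zero hlQ) (pow_ne_zero _ hsQ)
  have hY0 : Y ≠ 0 := by
    rw [hY]
    exact div_ne_zero (mul_ne_zero (mul_ne_zero (by norm_num) htQ) hlQ) (pow_ne_zero _ hsQ)
  have hP : W.Nonsingular X Y := by
    rw [WeierstrassCurve.Affine.nonsingular_iff, WeierstrassCurve.Affine.equation_iff,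
      ha1, ha2, ha3, ha4, ha6]
    constructor
    · rw [hX, hY, hQl]
      field_simp
      ring
    · left
      intro hcon
      apply hX0
      have hsq : X ^ 2 = 0 := by linarith
      exact pow_eq_zero_iff (by norm_num) |>.mp hsq
  have hyneg : Y ≠ W.negY X Y := by
    rw [WeierstrassCurve.Affine.negY, ha1, ha3]
    intro hcon
    apply hY0
    linarith
  have hadd := WeierstrassCurve.Affine.Point.add_self_of_Y_ne hyneg (h₁ := hP)
  set hQ : W.Nonsingular (W.addX X X (W.slope X X Y Y)) (W.addY X X Y (W.slope X X Y Y)) :=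
    WeierstrassCurve.Affine.nonsingular_add hP hP fun hxy => hyneg hxy.2 with hQdef
  -- the x-coordinate of the doubled point
  have hslope : W.slope X X Y Y = 3 * X ^ 2 / (2 * Y) := by
    rw [WeierstrassCurve.Affine.slope_of_Y_ne rfl hyneg, WeierstrassCurve.Affine.negY,
      ha1, ha2, ha3, ha4]
    ring
  have hxQeq : W.addX X X (W.slope X X Y Y)
      = (ℓ:ℚ) * ((s:ℚ) ^ 6 + 3 * (t:ℚ) ^ 2) / (4 * (t:ℚ) ^ 2 * (s:ℚ) ^ 2) := by
    rw [WeierstrassCurve.Affine.addX, hslope, ha1, ha2]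
    rw [hX, hY, hQl]
    field_simp
    ring
  -- 2-adic bookkeeping
  obtain ⟨α, hVs⟩ := V2.exists_intCast hs
  obtain ⟨β, hVt⟩ := V2.exists_intCast ht
  have hVl : V2 0 ((ℓ:ℚ)) := (V2.intCast hlodd).congr rfl (by push_cast; ring)
  have hV63 : V2 0 ((s:ℚ) ^ 6 + 3 * (t:ℚ) ^ 2) :=
    (V2.intCast h63odd).congr rfl (by push_cast; ring)
  have h4 : V2 2 (4:ℚ) := ⟨1, 1, odd_one, odd_one, by norm_num⟩
  have hnum : V2 (0 + 0) ((ℓ:ℚ) * ((s:ℚ) ^ 6 + 3 * (t:ℚ) ^ 2)) := hVl.mul hV63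
  have hden : V2 ((2 + ((β:ℤ) + (β:ℤ))) + ((α:ℤ) + (α:ℤ))) (4 * (t:ℚ) ^ 2 * (s:ℚ) ^ 2) :=
    ((h4.mul (hVt.mul hVt)).mul (hVs.mul hVs)).congr rfl (by ring)
  set m₀ : ℤ := (0 + 0) - ((2 + ((β:ℤ) + (β:ℤ))) + ((α:ℤ) + (α:ℤ))) with hm₀def
  have hm₀ : m₀ < 0 := by rw [hm₀def]; omega
  have hVxQ : V2 m₀ (W.addX X X (W.slope X X Y Y)) := (hnum.div hden).congr rfl hxQeq.symm
  have horb := v2_orbit hcodd hWc hQ hm₀ hVxQ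
  -- the doubled point has infinite order
  have hInjF : Function.Injective
      fun k : ℕ => ((2:ℕ) ^ k • WeierstrassCurve.Affine.Point.some _ _ hQ : W.Point) := by
    intro k1 k2 hkk
    obtain ⟨x1, y1, h1, e1, v1⟩ := horb k1
    obtain ⟨x2, y2, h2, e2, v2⟩ := horb k2
    simp only at hkk
    rw [e1, e2] at hkk
    injection hkk with hx12 hy12
    have := V2.unique v1 (v2.congr rfl hx12.symm)
    omega
  have hQfin : ¬ IsOfFinAddOrder (WeierstrassCurve.Affine.Point.some _ _ hQ) := by
    intro hf
    set n : ℕ := addOrderOf (WeierstrassCurve.Affine.Point.some _ _ hQ : W.Point) with hn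
    have hn0 : 0 < n := hf.addOrderOf_pos
    obtain ⟨k1, k2, hne, hgeq⟩ := Finite.exists_ne_map_eq_of_infinite
      (fun k : ℕ => (⟨2 ^ k % n, Nat.mod_lt _ hn0⟩ : Fin n))
    apply hne
    apply hInjF
    simp only
    have hval : 2 ^ k1 % n = 2 ^ k2 % n := by
      simpa using congrArg Fin.val hgeq
    rw [← mod_addOrderOf_nsmul, ← hn, hval, hn, mod_addOrderOf_nsmul]
  have hPfin : ¬ IsOfFinAddOrder (WeierstrassCurve.Affine.Point.some _ _ hP) := by
    intro hf
    exact hQfin (hadd ▸ hf.add hf)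
  refine ⟨⟨hP, addOrderOf_eq_zero_iff.mpr hPfin⟩,
    ⟨zmultiplesHom _ (WeierstrassCurve.Affine.Point.some _ _ hP), ?_⟩,
    ((s:ℚ) ^ 3 + 3 * t) / s, ((s:ℚ) ^ 3 - 3 * t) / s, ?_⟩
  · intro m1 m2 hmm
    simp only [zmultiplesHom_apply] at hmm
    by_contra hne
    apply hPfin
    refine isOfFinAddOrder_iff_zsmul_eq_zero.mpr ⟨m1 - m2, by omega, ?_⟩
    rw [sub_zsmul, hmm]
    simp
  · rw [hQl]
    field_simp
    ring
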